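/- Let Z_1, …, Z_n be independent Bernoulli random variables with parameters p_1, …, p_n ∈ [0,1], let Y = Σ_{i=1}^n Z_i and μ = 𝔼[Y] = Σ_{i=1}^n p_i. Let r ≥ 2 be an integer and let 0 < α ≤ 1/4, and suppose μ ≥ (r − 1)/α. Then ℙ(Y ≤ r − 2) ≤ e^4 · exp(−1/(2α)). -/

import Mathlib

open MeasureTheory ProbabilityTheory Real

/-- Chernoff-type bound: for independent Bernoulli variables `Z_1, …, Z_n` with
parameters `p_i`, sum `Y`, mean `μY = Σ p_i ≥ (r - 1)/α` with `r ≥ 2` an integer and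
`0 < α ≤ 1/4`, we have `ℙ(Y ≤ r - 2) ≤ e^4 · exp (-1/(2α))`. -/
theorem stmt7 {Ω : Type*} [MeasurableSpace Ω]
    (μ : Measure Ω) [IsProbabilityMeasure μ]
    (n : ℕ) (p : Fin n → ℝ) (hp0 : ∀ i, 0 ≤ p i) (hp1 : ∀ i, p i ≤ 1)
    (Z : Fin n → Ω → Bool)
    (hZmeas : ∀ i, Measurable (Z i))
    (hZindep : iIndepFun Z μ)
    (hZprob : ∀ i, (μ {ω | Z i ω = true}).toReal = p i)
    (r : ℕ) (hr : 2 ≤ r) (α : ℝ) (hα : 0 < α) (hα4 : α ≤ 1 / 4)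
    (hmean : ((r : ℝ) - 1) / α ≤ ∑ i, p i) :
    (μ {ω | (∑ i, if Z i ω = true then (1 : ℝ) else 0) ≤ (r : ℝ) - 2}).toReal
      ≤ exp 4 * exp (-(1 / (2 * α))) := by
  classical
  set t : ℝ := -Real.log 2 with ht_def
  have ht : t ≤ 0 := neg_nonpos.mpr (Real.log_nonneg one_le_two)
  set X : Fin n → Ω → ℝ := fun i ω => if Z i ω = true then (1 : ℝ) else 0 with hX_def
  have hXmeas : ∀ i, Measurable (X i) := fun i => by
    have : X i = (fun b : Bool => if b = true then (1:ℝ) else 0) ∘ Z i := rfl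
    rw [this]
    exact (Measurable.of_discrete).comp (hZmeas i)
  have hXindep : iIndepFun X μ :=
    hZindep.comp (fun i (b : Bool) => if b = true then (1:ℝ) else 0)
      (fun i => Measurable.of_discrete)
  -- each exp (t * X i ω) integrable
  have h_int : ∀ i, Integrable (fun ω => exp (t * X i ω)) μ := by
    intro i
    refine Integrable.mono' (integrable_const (max (exp t) 1))
      (((hXmeas i).const_mul t).exp.aestronglyMeasurable) (ae_of_all _ fun ω => ?_)
    rw [Real.norm_eq_abs, abs_of_pos (exp_pos _)]
    by_cases h : Z i ω = true
    · have : X i ω = 1 := by simp [hX_def, h]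
      rw [this, mul_one]
      exact le_max_left _ _
    · have : X i ω = 0 := by simp [hX_def, h]
      rw [this, mul_zero, Real.exp_zero]
      exact le_max_right _ _
  have hsetmeas : ∀ i, MeasurableSet {ω | Z i ω = true} := fun i =>
    (hZmeas i) (measurableSet_singleton true)
  -- compute mgf of each X i
  have hmgf : ∀ i, mgf (X i) μ t = 1 - p i / 2 := by
    intro i
    have hexp : exp t = 1 / 2 := by
      rw [ht_def, Real.exp_neg, Real.exp_log two_pos]; norm_num
    have heq : (fun ω => exp (t * X i ω)) =
        fun ω => Set.indicator {ω | Z i ω = true} (fun _ => exp t - 1) ω + 1 := by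
      funext ω
      by_cases h : Z i ω = true <;>
        simp [hX_def, h, Set.indicator_apply, Set.mem_setOf_eq]
    rw [mgf, heq, integral_add ((integrable_const _).indicator (hsetmeas i))
      (integrable_const 1), integral_indicator_const _ (hsetmeas i), integral_const]
    simp [hZprob i, hexp]
    rw [measureReal_def, hZprob i]
    ring
  -- mgf of sum
  have hmgf_sum : mgf (∑ i, X i) μ t = ∏ i, (1 - p i / 2) := by
    rw [hXindep.mgf_sum hXmeas]
    exact Finset.prod_congr rfl fun i _ => hmgf i
  have hprod : (∏ i, (1 - p i / 2)) ≤ exp (-(∑ i, p i) / 2) := by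
    have : (∏ i : Fin n, (1 - p i / 2)) ≤ ∏ i : Fin n, exp (-(p i / 2)) := by
      apply Finset.prod_le_prod
      · intro i _; nlinarith [hp0 i, hp1 i]
      · intro i _
        have := Real.add_one_le_exp (-(p i / 2))
        linarith
    refine this.trans_eq ?_
    rw [← Real.exp_sum]
    congr 1
    simp [neg_div, Finset.sum_div]
  -- Chernoff
  have hchern := measure_le_le_exp_mul_mgf (X := ∑ i, X i) (μ := μ) ((r : ℝ) - 2) ht
    (hXindep.integrable_exp_mul_sum hXmeas (fun i _ => h_int i))
  have hset : {ω | (∑ i, if Z i ω = true then (1 : ℝ) else 0) ≤ (r : ℝ) - 2} =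
      {ω | (∑ i, X i) ω ≤ (r : ℝ) - 2} := by
    congr 1
    funext ω
    simp [hX_def, Finset.sum_apply]
  rw [hset]
  refine hchern.trans ?_
  rw [hmgf_sum]
  have hS0 : 0 ≤ ∏ i, (1 - p i / 2) :=
    Finset.prod_nonneg fun i _ => by nlinarith [hp0 i, hp1 i]
  calc exp (-t * ((r:ℝ) - 2)) * ∏ i, (1 - p i / 2)
      ≤ exp (-t * ((r:ℝ) - 2)) * exp (-(∑ i, p i) / 2) := by
        exact mul_le_mul_of_nonneg_left hprod (exp_pos _).le
    _ ≤ exp 4 * exp (-(1 / (2 * α))) := by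
        rw [← Real.exp_add, ← Real.exp_add]
        apply Real.exp_le_exp.mpr
        have hr2 : (2:ℝ) ≤ (r:ℝ) := by exact_mod_cast hr
        have hlog2 : Real.log 2 ≤ 1 := by
          have := Real.log_le_sub_one_of_pos (two_pos (α := ℝ))
          linarith
        have hlog2' : 0 ≤ Real.log 2 := Real.log_nonneg one_le_two
        have hβ : 4 ≤ 1 / α := by
          rw [le_div_iff₀ hα]; linarith
        have hS : ((r:ℝ) - 1) * (1 / α) ≤ ∑ i, p i := by
          rw [mul_one_div]; exact hmean
        have hne : -t * ((r:ℝ) - 2) = Real.log 2 * ((r:ℝ) - 2) := by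
          rw [ht_def, neg_neg]
        rw [hne]
        have key : Real.log 2 * ((r:ℝ) - 2) + 1 / (2 * α) ≤ 4 + (∑ i, p i) / 2 := by
          have h1 : 1 / (2 * α) = (1 / α) / 2 := by
            field_simp
          rw [h1]
          nlinarith [mul_le_mul_of_nonneg_left hlog2 (by linarith : (0:ℝ) ≤ (r:ℝ) - 2),
            mul_le_mul_of_nonneg_left hβ (by linarith : (0:ℝ) ≤ (r:ℝ) - 2)]
        linarith
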